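/- arXiv:2304.00945 — 3 statements merged into one kernel-verified Lean document; each statement's English description precedes it below -/
import Mathlib

section
/- Let G be a 3-connected graph. Every trivial tri-separation of G is nested with every strong tri-separation of G. (A tri-separation (A,B) is trivial if A and B are the sides of a 3-edge-cut one of whose sides has size one; it is strong if every vertex in its separator has degree at least four. Two mixed-separations (A,B) and (C,D) are nested if, after possibly swapping A with B or C with D, we have A ⊆ C and B ⊇ D.) -/
namespace Paper

open SimpleGraph

variable {V : Type*} [Fintype V] [DecidableEq V]

/-- A graph is `k`-connected if it has more than `k` vertices and deleting
fewer than `k` vertices never disconnects it. -/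
def KConnected {W : Type*} (k : ℕ) (H : SimpleGraph W) : Prop :=
  k < Nat.card W ∧ ∀ S : Set W, S.ncard < k → (H.induce Sᶜ).Connected

/-- A mixed-separation of `G`: `A ∪ B = V(G)` and both `A \ B` and `B \ A` are nonempty. -/
def MixedSep (G : SimpleGraph V) (A B : Set V) : Prop :=
  A ∪ B = Set.univ ∧ (A \ B).Nonempty ∧ (B \ A).Nonempty

/-- The edges of the separator of `(A,B)`: the edges between `A \ B` and `B \ A`. -/
def sepEdges (G : SimpleGraph V) (A B : Set V) : Set (Sym2 V) :=
  {e | e ∈ G.edgeSet ∧ ∃ x ∈ A \ B, ∃ y ∈ B \ A, e = s(x, y)}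

/-- The separator of `(A,B)`: the vertices of `A ∩ B` together with the
edges between `A \ B` and `B \ A`, viewed as a set in `V ⊕ Sym2 V`. -/
def sepSet (G : SimpleGraph V) (A B : Set V) : Set (V ⊕ Sym2 V) :=
  (Sum.inl '' (A ∩ B)) ∪ (Sum.inr '' sepEdges G A B)

/-- The order of a mixed-separation: the size of its separator. -/
noncomputable def sepOrder (G : SimpleGraph V) (A B : Set V) : ℕ :=
  (sepSet G A B).ncard

/-- A mixed `k`-separation. -/
def MixedKSep (G : SimpleGraph V) (k : ℕ) (A B : Set V) : Prop :=
  MixedSep G A B ∧ sepOrder G A B = k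

/-- A tri-separation: a mixed 3-separation such that every vertex of `A ∩ B`
has at least two neighbours in both `G[A]` and `G[B]`. -/
def TriSep (G : SimpleGraph V) (A B : Set V) : Prop :=
  MixedKSep G 3 A B ∧
    ∀ v ∈ A ∩ B, 2 ≤ (G.neighborSet v ∩ A).ncard ∧ 2 ≤ (G.neighborSet v ∩ B).ncard

/-- Two mixed-separations are nested if, after possibly swapping the names of
the sides of either one, `A ⊆ C` and `B ⊇ D`. -/
def Nested (A B C D : Set V) : Prop :=
  (A ⊆ C ∧ D ⊆ B) ∨ (A ⊆ D ∧ C ⊆ B) ∨ (B ⊆ C ∧ D ⊆ A) ∨ (B ⊆ D ∧ C ⊆ A)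

/-- The induced subgraph `G[A]` contains a cycle. -/
def HasCycleIn (G : SimpleGraph V) (A : Set V) : Prop :=
  ∃ (u : V) (p : G.Walk u u), p.IsCycle ∧ ∀ x ∈ p.support, x ∈ A

/-- A mixed 3-separation is nontrivial if both sides induce a subgraph containing a cycle. -/
def NontrivialSep (G : SimpleGraph V) (A B : Set V) : Prop :=
  HasCycleIn G A ∧ HasCycleIn G B

/-- A mixed-separation is strong if every vertex in its separator has degree at least 4. -/
def StrongSep (G : SimpleGraph V) (A B : Set V) : Prop :=
  ∀ v ∈ A ∩ B, 4 ≤ (G.neighborSet v).ncard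

/-- A tri-separation is totally nested if it is nested with every tri-separation of `G`. -/
def TotallyNested (G : SimpleGraph V) (A B : Set V) : Prop :=
  ∀ C D : Set V, TriSep G C D → Nested A B C D

/-- A trivial tri-separation: its sides are the sides `{v}` and `V \ {v}` of an
atomic cut at a degree-3 vertex `v`. -/
def TrivialSep (G : SimpleGraph V) (A B : Set V) : Prop :=
  ∃ v : V, (G.neighborSet v).ncard = 3 ∧
    ((A = {v} ∧ B = {v}ᶜ) ∨ (B = {v} ∧ A = {v}ᶜ))

/-- Diagonal edges of the crossing-diagram of `(A,B)` and `(C,D)`: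
edges whose endvertices lie in opposite corners. -/
def diagEdges (G : SimpleGraph V) (A B C D : Set V) : Set (Sym2 V) :=
  {e | e ∈ G.edgeSet ∧ ∃ x y, e = s(x, y) ∧
    ((x ∈ (A \ B) ∩ (C \ D) ∧ y ∈ (B \ A) ∩ (D \ C)) ∨
     (x ∈ (A \ B) ∩ (D \ C) ∧ y ∈ (B \ A) ∩ (C \ D)))}

/-- The centre of the crossing-diagram: `A ∩ B ∩ C ∩ D` together with the diagonal edges. -/
def centre (G : SimpleGraph V) (A B C D : Set V) : Set (V ⊕ Sym2 V) :=
  (Sum.inl '' (A ∩ B ∩ C ∩ D)) ∪ (Sum.inr '' diagEdges G A B C D)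

/-- The link for the side `C` in the crossing-diagram of `(A,B)` and `(C,D)`:
the vertices `(A ∩ B) \ D` together with the non-diagonal edges of the separator
of `(A,B)` having an endvertex in a corner for `C`. -/
def link (G : SimpleGraph V) (A B C D : Set V) : Set (V ⊕ Sym2 V) :=
  (Sum.inl '' ((A ∩ B) \ D)) ∪
    (Sum.inr '' {e | e ∈ sepEdges G A B ∧ e ∉ diagEdges G A B C D ∧ ∃ x ∈ e, x ∈ C \ D})

/-- The corner-separator at the corner for `{A,C}`: the union of the links for `A`
and for `C` together with the centre, minus the diagonal edges without an
endvertex in the corner for `{A,C}`. -/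
def cornerSep (G : SimpleGraph V) (A B C D : Set V) : Set (V ⊕ Sym2 V) :=
  link G C D A B ∪ link G A B C D ∪ (Sum.inl '' (A ∩ B ∩ C ∩ D)) ∪
    (Sum.inr '' {e | e ∈ diagEdges G A B C D ∧ ∃ x ∈ e, x ∈ (A \ B) ∩ (C \ D)})

/-- Jumping edges: edges joining vertices of two opposite links. -/
def jumpEdges (G : SimpleGraph V) (A B C D : Set V) : Set (Sym2 V) :=
  {e | e ∈ G.edgeSet ∧ ∃ x y, e = s(x, y) ∧
    ((x ∈ (A ∩ B) \ D ∧ y ∈ (A ∩ B) \ C) ∨ (x ∈ (C ∩ D) \ B ∧ y ∈ (C ∩ D) \ A))}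

/-- A 2-separation: a separation of order two with no edges in its separator. -/
def TwoSep (G : SimpleGraph V) (A B : Set V) : Prop :=
  A ∪ B = Set.univ ∧ (A \ B).Nonempty ∧ (B \ A).Nonempty ∧
    (A ∩ B).ncard = 2 ∧ sepEdges G A B = ∅

/-- `K` is (the vertex set of) a connected component of `G - S`. -/
def IsCompOf (G : SimpleGraph V) (S K : Set V) : Prop :=
  ∃ c : (G.induce Sᶜ).ConnectedComponent, K = Subtype.val '' c.supp
/-- Trivial tri-separations of a 3-connected graph are nested
with all strong tri-separations. -/
theorem stmt1 (G : SimpleGraph V) (h3 : KConnected 3 G) (A B C D : Set V)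
    (hAB : TriSep G A B) (htriv : TrivialSep G A B)
    (hCD : TriSep G C D) (hstrong : StrongSep G C D) :
    Nested A B C D := by
  obtain ⟨v, hdeg, hcase⟩ := htriv
  have hunion : C ∪ D = Set.univ := hCD.1.1.1
  have hv : v ∈ C ∪ D := by rw [hunion]; trivial
  have hnot : ¬ (v ∈ C ∧ v ∈ D) := by
    rintro ⟨hc, hd⟩
    have := hstrong v ⟨hc, hd⟩
    omega
  rcases hcase with ⟨hA, hB⟩ | ⟨hB, hA⟩
  · rcases hv with hc | hd
    · left
      refine ⟨by simp [hA, hc], ?_⟩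
      intro x hx
      simp only [hB, Set.mem_compl_iff, Set.mem_singleton_iff]
      rintro rfl
      exact hnot ⟨hc, hx⟩
    · right; left
      refine ⟨by simp [hA, hd], ?_⟩
      intro x hx
      simp only [hB, Set.mem_compl_iff, Set.mem_singleton_iff]
      rintro rfl
      exact hnot ⟨hx, hd⟩
  · rcases hv with hc | hd
    · right; right; left
      refine ⟨by simp [hB, hc], ?_⟩
      intro x hx
      simp only [hA, Set.mem_compl_iff, Set.mem_singleton_iff]
      rintro rfl
      exact hnot ⟨hc, hx⟩
    · right; right; right
      refine ⟨by simp [hB, hd], ?_⟩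
      intro x hx
      simp only [hA, Set.mem_compl_iff, Set.mem_singleton_iff]
      rintro rfl
      exact hnot ⟨hx, hd⟩


end Paper
end

section
/- Let G be a 3-connected graph and let (A,B) be a mixed 3-separation of G such that both G[A] and G[B] contain a cycle (i.e. (A,B) is nontrivial). Then the edges in the separator of (A,B) form a matching between A\B and B\A: no two of them share an endvertex. -/
namespace Paper

open SimpleGraph

variable {V : Type*} [Fintype V] [DecidableEq V]

omit [Fintype V] [DecidableEq V] in
lemma cross_walk {W : Type*} {H : SimpleGraph W} {a b : W} (w : H.Walk a b)
    (P : Set W) (ha : a ∈ P) (hb : b ∉ P) :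
    ∃ u v, H.Adj u v ∧ u ∈ P ∧ v ∉ P := by
  induction w with
  | nil => exact absurd ha hb
  | @cons u v c hadj p ih =>
    by_cases hv : v ∈ P
    · exact ih hv hb
    · exact ⟨u, v, hadj, ha, hv⟩

lemma cycle_three {G : SimpleGraph V} {A : Set V} (h : HasCycleIn G A)
    {S : Set V} (hS : S.ncard ≤ 2) : ∃ a ∈ A, a ∉ S := by
  obtain ⟨u, p, hc, hsupp⟩ := h
  have hnd := hc.support_nodup
  have hlen : 3 ≤ p.support.tail.length := by
    have := hc.three_le_length
    have h2 := p.length_support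
    have h3 : p.support.tail.length = p.support.length - 1 := List.length_tail
    omega
  have hsub : {x | x ∈ p.support.tail} ⊆ A := fun x hx =>
    hsupp x (List.mem_of_mem_tail hx)
  have hcard : 3 ≤ ({x | x ∈ p.support.tail} : Set V).ncard := by
    rw [← List.coe_toFinset, Set.ncard_coe_finset, List.toFinset_card_of_nodup hnd]
    exact hlen
  by_contra hcon
  push_neg at hcon
  have hsubS : {x | x ∈ p.support.tail} ⊆ S := fun x hx => hcon x (hsub hx)
  have := Set.ncard_le_ncard hsubS (Set.toFinite S)
  omega

omit [Fintype V] [DecidableEq V] in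
lemma sepEdges_comm (G : SimpleGraph V) (A B : Set V) :
    sepEdges G A B = sepEdges G B A := by
  ext e
  constructor <;>
  · rintro ⟨he, x, hx, y, hy, rfl⟩
    exact ⟨he, y, hy, x, hx, Sym2.eq_swap⟩

lemma sepOrder_count {G : SimpleGraph V} {A B : Set V} :
    sepOrder G A B = (A ∩ B).ncard + (sepEdges G A B).ncard := by
  unfold sepOrder sepSet
  rw [Set.ncard_union_eq, Set.ncard_image_of_injective _ Sum.inl_injective,
    Set.ncard_image_of_injective _ Sum.inr_injective]
  exact Set.disjoint_left.mpr (by rintro _ ⟨x, -, rfl⟩ ⟨y, -, h⟩; simp at h)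

lemma sepOrder_comm (G : SimpleGraph V) (A B : Set V) :
    sepOrder G B A = sepOrder G A B := by
  rw [sepOrder_count, sepOrder_count, Set.inter_comm, sepEdges_comm]

/-- Key lemma: two distinct separator edges cannot share an endvertex in `A \ B`. -/
lemma key_lemma (G : SimpleGraph V) (h3 : KConnected 3 G) (A B : Set V)
    (hAB : MixedKSep G 3 A B) (hnt : NontrivialSep G A B)
    {e f : Sym2 V} (he : e ∈ sepEdges G A B) (hf : f ∈ sepEdges G A B)
    (hef : e ≠ f) {x : V} (hx : x ∈ A \ B) (hxe : x ∈ e) (hxf : x ∈ f) :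
    False := by
  obtain ⟨⟨hunion, hAne, hBne⟩, horder⟩ := hAB
  rw [sepOrder_count] at horder
  have hpair : ({e, f} : Set (Sym2 V)) ⊆ sepEdges G A B := by
    rintro g (rfl | rfl) <;> assumption
  have hpair2 : ({e, f} : Set (Sym2 V)).ncard = 2 := Set.ncard_pair hef
  have hm : 2 ≤ (sepEdges G A B).ncard := by
    rw [← hpair2]; exact Set.ncard_le_ncard hpair (Set.toFinite _)
  have hk : (A ∩ B).ncard ≤ 1 := by omega
  -- construct the cutting set S
  obtain ⟨S, hScard, hABsub, hcov⟩ :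
      ∃ S : Set V, S.ncard ≤ 2 ∧ A ∩ B ⊆ S ∧
        ∀ g ∈ sepEdges G A B, ∃ s ∈ S, s ∈ g := by
    rcases Nat.le_one_iff_eq_zero_or_eq_one.mp hk with h0 | h1
    · -- A ∩ B = ∅, three edges
      have hABe : A ∩ B = ∅ := (Set.ncard_eq_zero (Set.toFinite _)).mp h0
      have hm3 : (sepEdges G A B).ncard = 3 := by omega
      have hss : ({e, f} : Set (Sym2 V)) ⊂ sepEdges G A B :=
        hpair.ssubset_of_ne (fun h => by rw [← h, hpair2] at hm3; omega)
      obtain ⟨g, hg, hgef⟩ := Set.exists_of_ssubset hss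
      obtain ⟨hgE, u, hu, w, hw, rfl⟩ := hg
      refine ⟨{x, u}, (Set.ncard_insert_le _ _).trans (by simp), by simp [hABe], ?_⟩
      -- all edges are e, f, or s(u,w)
      have htrip : ({e, f, s(u, w)} : Set (Sym2 V)) = sepEdges G A B := by
        apply Set.eq_of_subset_of_ncard_le
        · rintro a (rfl | rfl | rfl)
          · exact he
          · exact hf
          · exact ⟨hgE, u, hu, w, hw, rfl⟩
        · have h1 : ({e, f, s(u, w)} : Set (Sym2 V)).ncard = 3 := by
            rw [Set.ncard_insert_of_notMem, Set.ncard_insert_of_notMem, Set.ncard_singleton]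
            · simp only [Set.mem_singleton_iff]
              intro hfe
              exact hgef (by rw [hfe]; exact Or.inr rfl)
            · simp only [Set.mem_insert_iff, Set.mem_singleton_iff]
              rintro (hfe | hfe)
              · exact hef hfe
              · exact hgef (by rw [hfe]; exact Or.inl rfl)
          omega
        · exact Set.toFinite _
      intro a ha
      rw [← htrip] at ha
      rcases ha with rfl | rfl | rfl
      · exact ⟨x, Set.mem_insert _ _, hxe⟩
      · exact ⟨x, Set.mem_insert _ _, hxf⟩
      · exact ⟨u, by simp, Sym2.mem_mk_left _ _⟩
    · -- A ∩ B = {v}, two edges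
      obtain ⟨v, hv⟩ := Set.ncard_eq_one.mp h1
      have hm2 : (sepEdges G A B).ncard = 2 := by omega
      have heq : ({e, f} : Set (Sym2 V)) = sepEdges G A B :=
        Set.eq_of_subset_of_ncard_le hpair (by omega) (Set.toFinite _)
      refine ⟨{x, v}, (Set.ncard_insert_le _ _).trans (by simp),
        by rw [hv]; intro a ha; simp [ha], ?_⟩
      intro a ha
      rw [← heq] at ha
      rcases ha with rfl | rfl
      · exact ⟨x, Set.mem_insert _ _, hxe⟩
      · exact ⟨x, Set.mem_insert _ _, hxf⟩
  -- find vertices on the two sides outside S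
  obtain ⟨a, haA, haS⟩ := cycle_three hnt.1 hScard
  obtain ⟨b, hbB, hbS⟩ := cycle_three hnt.2 hScard
  have haAB : a ∈ A \ B := ⟨haA, fun h => haS (hABsub ⟨haA, h⟩)⟩
  have hbBA : b ∈ B \ A := ⟨hbB, fun h => hbS (hABsub ⟨h, hbB⟩)⟩
  -- S disconnects G
  have hconn : (G.induce Sᶜ).Connected := h3.2 S (by omega)
  have hreach := hconn.preconnected ⟨a, haS⟩ ⟨b, hbS⟩
  obtain ⟨p⟩ := hreach
  obtain ⟨u', v', hadj, huP, hvP⟩ :=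
    cross_walk p {z : ↥(Sᶜ : Set V) | (z : V) ∈ A \ B} haAB (fun h => h.2 hbBA.1)
  have hadj' : G.Adj u' v' := hadj
  have hvB : (v' : V) ∈ B \ A := by
    have hvuniv : (v' : V) ∈ A ∪ B := hunion ▸ Set.mem_univ _
    rcases hvuniv with hA | hB
    · by_cases hB' : (v' : V) ∈ B
      · exact absurd (hABsub ⟨hA, hB'⟩) v'.2
      · exact absurd ⟨hA, hB'⟩ hvP
    · exact ⟨hB, fun hA => absurd (hABsub ⟨hA, hB⟩) v'.2⟩
  have hedge : s((u' : V), (v' : V)) ∈ sepEdges G A B :=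
    ⟨(SimpleGraph.mem_edgeSet G).mpr hadj', _, huP, _, hvB, rfl⟩
  obtain ⟨s, hsS, hse⟩ := hcov _ hedge
  rcases Sym2.mem_iff.mp hse with rfl | rfl
  · exact u'.2 hsS
  · exact v'.2 hsS

/-- In a nontrivial mixed 3-separation of a 3-connected graph,
the edges of the separator form a matching: no two of them share an endvertex. -/
theorem stmt2 (G : SimpleGraph V) (h3 : KConnected 3 G) (A B : Set V)
    (hAB : MixedKSep G 3 A B) (hnt : NontrivialSep G A B) :
    ∀ e ∈ sepEdges G A B, ∀ f ∈ sepEdges G A B, e ≠ f →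
      ∀ x : V, x ∈ e → x ∉ f := by
  intro e he f hf hef x hxe hxf
  obtain ⟨hE, x1, hx1, y1, hy1, heq⟩ := he
  have hxAB : x ∈ A \ B ∨ x ∈ B \ A := by
    rw [heq] at hxe
    rcases Sym2.mem_iff.mp hxe with rfl | rfl
    · exact Or.inl hx1
    · exact Or.inr hy1
  rw [heq] at hxe
  rcases hxAB with hx | hx
  · exact key_lemma G h3 A B hAB hnt (heq ▸ ⟨hE, x1, hx1, y1, hy1, heq⟩) hf
      (heq ▸ hef) hx hxe hxf
  · have hAB' : MixedKSep G 3 B A := by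
      obtain ⟨⟨hu, h1, h2⟩, ho⟩ := hAB
      exact ⟨⟨Set.union_comm B A ▸ hu, h2, h1⟩, (sepOrder_comm G A B).trans ho⟩
    have hnt' : NontrivialSep G B A := ⟨hnt.2, hnt.1⟩
    have he' : s(x1, y1) ∈ sepEdges G B A := by
      rw [← sepEdges_comm]; exact heq ▸ ⟨hE, x1, hx1, y1, hy1, heq⟩
    have hf' : f ∈ sepEdges G B A := by rw [← sepEdges_comm]; exact hf
    exact key_lemma G h3 B A hAB' hnt' he' hf' (heq ▸ hef) hx hxe hxf

end Paper
end

section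
/- Let (X1,X2) be a mixed 3-separation of a 3-connected graph G and let v be a vertex in X1∩X2. Then exactly one of the following holds: (1) v has at least two neighbours in both X1 and X2; (2) there is a unique index i ∈ {1,2} such that v has precisely one neighbour in X_i and at least two neighbours in X_{3−i}; moreover in case (2) the unique neighbour of v in X_i lies in X_i \ X_{3−i}, and v has two neighbours in X_{3−i} \ X_i. -/
namespace Paper

open SimpleGraph

variable {V : Type*} [Fintype V] [DecidableEq V]

section StmtThreeAux

variable {G : SimpleGraph V} {X1 X2 : Set V}

private lemma my_walk_confine {S L : Set V} (hL : ∀ u ∈ L, ∀ w ∈ Sᶜ, G.Adj u w → w ∈ L)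
    {a b : (Sᶜ : Set V)} (p : (G.induce Sᶜ).Walk a b) : a.val ∈ L → b.val ∈ L := by
  induction p with
  | nil => exact id
  | @cons u w c h q ih => exact fun ha => ih (hL _ ha _ w.2 (by simpa using h))

private lemma my_not_connected {S L R : Set V}
    (hcov : ∀ x, x ∉ S → x ∈ L ∨ x ∈ R)
    (hd : ∀ x, x ∈ L → x ∈ R → False)
    (hx : ∃ x, x ∈ L ∧ x ∉ S) (hy : ∃ y, y ∈ R ∧ y ∉ S)
    (hadj : ∀ u ∈ L, ∀ w, w ∉ S → w ∈ R → ¬ G.Adj u w) :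
    ¬ (G.induce Sᶜ).Connected := by
  obtain ⟨x, hxL, hxS⟩ := hx
  obtain ⟨y, hyR, hyS⟩ := hy
  intro hc
  obtain ⟨p⟩ := hc.preconnected ⟨x, hxS⟩ ⟨y, hyS⟩
  have hclo : ∀ u ∈ L, ∀ w ∈ Sᶜ, G.Adj u w → w ∈ L := by
    intro u hu w hw hadj'
    rcases hcov w hw with h | h
    · exact h
    · exact absurd hadj' (hadj u hu w hw h)
  exact hd y (my_walk_confine hclo p hxL) hyR

private lemma my_deg (h3 : KConnected 3 G) (v : V) : 3 ≤ (G.neighborSet v).ncard := by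
  by_contra hlt
  push_neg at hlt
  have hc := h3.2 (G.neighborSet v) hlt
  have hcard : 3 < Nat.card V := h3.1
  have hne : ((G.neighborSet v ∪ {v})ᶜ).Nonempty := by
    by_contra hemp
    rw [Set.not_nonempty_iff_eq_empty, Set.compl_empty_iff] at hemp
    have h1 : (Set.univ : Set V).ncard ≤ (G.neighborSet v).ncard + ({v} : Set V).ncard := by
      rw [← hemp]; exact Set.ncard_union_le _ _
    rw [Set.ncard_univ, Set.ncard_singleton] at h1
    omega
  obtain ⟨w, hw⟩ := hne
  simp only [Set.mem_compl_iff, Set.mem_union, Set.mem_singleton_iff, not_or] at hw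
  refine my_not_connected (G := G) (S := G.neighborSet v) (L := {v}) (R := {x | x ≠ v})
    ?_ ?_ ?_ ?_ ?_ hc
  · intro x _
    by_cases hx : x = v
    · exact Or.inl hx
    · exact Or.inr hx
  · intro x hx hx'; exact hx' hx
  · exact ⟨v, rfl, by simp⟩
  · exact ⟨w, hw.2, hw.1⟩
  · intro u hu w' hw' _ hadj
    rw [Set.mem_singleton_iff] at hu
    subst hu
    exact hw' hadj

private lemma my_count (h : MixedKSep G 3 X1 X2) :
    (X1 ∩ X2).ncard + (sepEdges G X1 X2).ncard = 3 := by
  have h2 := h.2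
  unfold sepOrder sepSet at h2
  rw [Set.ncard_union_eq ?_ (Set.toFinite _) (Set.toFinite _),
      Set.ncard_image_of_injective _ Sum.inl_injective,
      Set.ncard_image_of_injective _ Sum.inr_injective] at h2
  · exact h2
  · rw [Set.disjoint_left]
    rintro _ ⟨x, -, rfl⟩ ⟨e, -, he⟩
    cases he

private lemma my_sepEdges_comm : sepEdges G X1 X2 = sepEdges G X2 X1 := by
  ext e
  constructor
  · rintro ⟨he, x, hx, y, hy, rfl⟩
    exact ⟨he, y, hy, x, hx, Sym2.eq_swap⟩
  · rintro ⟨he, x, hx, y, hy, rfl⟩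
    exact ⟨he, y, hy, x, hx, Sym2.eq_swap⟩

private lemma my_symm (h : MixedKSep G 3 X1 X2) : MixedKSep G 3 X2 X1 := by
  obtain ⟨⟨hu, h1, h2⟩, hord⟩ := h
  refine ⟨⟨by rw [Set.union_comm]; exact hu, h2, h1⟩, ?_⟩
  unfold sepOrder sepSet at *
  rw [Set.inter_comm X2 X1, ← my_sepEdges_comm]
  exact hord

private lemma my_nbr (h3 : KConnected 3 G) (h : MixedKSep G 3 X1 X2) {v : V}
    (hv : v ∈ X1 ∩ X2) : ∃ u, G.Adj v u ∧ u ∈ X1 \ X2 := by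
  by_contra hno
  push_neg at hno
  classical
  set Y : Set V := {y | y ∈ X2 \ X1 ∧ ∃ x ∈ X1 \ X2, G.Adj x y} with hYdef
  have hYsub : Y ⊆ X2 \ X1 := fun y hy => hy.1
  have hYcard : Y.ncard ≤ (sepEdges G X1 X2).ncard := by
    refine Set.ncard_le_ncard_of_injOn
      (fun y => if hy : ∃ x ∈ X1 \ X2, G.Adj x y then s(hy.choose, y) else s(y, y))
      ?_ ?_ (Set.toFinite _)
    · rintro y ⟨hy2, hex⟩
      simp only [dif_pos hex]
      exact ⟨G.mem_edgeSet.2 hex.choose_spec.2, hex.choose, hex.choose_spec.1, y, hy2, rfl⟩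
    · rintro y1 ⟨hy1, hex1⟩ y2 ⟨hy2, hex2⟩ heq
      simp only [dif_pos hex1, dif_pos hex2, Sym2.eq_iff] at heq
      rcases heq with ⟨-, h⟩ | ⟨h1, h2⟩
      · exact h
      · exact absurd hex2.choose_spec.1.1 (fun hc => hy1.2 (h2 ▸ hc))
  have hcount := my_count h
  have hpos : 1 ≤ (X1 ∩ X2).ncard := (Set.ncard_pos (Set.toFinite _)).2 ⟨v, hv⟩
  set S : Set V := ((X1 ∩ X2) \ {v}) ∪ Y with hSdef
  have hS : S.ncard < 3 := by
    have hd1 : ((X1 ∩ X2) \ {v}).ncard = (X1 ∩ X2).ncard - 1 :=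
      Set.ncard_diff_singleton_of_mem hv
    have := Set.ncard_union_le ((X1 ∩ X2) \ {v}) Y
    rw [hSdef]
    omega
  have hc := h3.2 S hS
  have huniv : X1 ∪ X2 = Set.univ := h.1.1
  refine my_not_connected (G := G) (S := S) (L := X1 \ X2) (R := X2) ?_ ?_ ?_ ?_ ?_ hc
  · intro x _
    by_cases hx2 : x ∈ X2
    · exact Or.inr hx2
    · have : x ∈ X1 ∪ X2 := huniv ▸ Set.mem_univ x
      rcases this with hx1 | hx1
      · exact Or.inl ⟨hx1, hx2⟩
      · exact absurd hx1 hx2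
  · intro x hx hx'; exact hx.2 hx'
  · obtain ⟨x, hx⟩ := h.1.2.1
    refine ⟨x, hx, ?_⟩
    rintro (⟨hx1, -⟩ | hx1)
    · exact hx.2 hx1.2
    · exact (hYsub hx1).2 hx.1
  · refine ⟨v, hv.2, ?_⟩
    rintro (⟨-, hv1⟩ | hv1)
    · exact hv1 rfl
    · exact (hYsub hv1).2 hv.1
  · intro u hu w hwS hw2 hadj
    by_cases hw1 : w ∈ X1
    · have hwv : w = v := by
        by_contra hne
        exact hwS (Or.inl ⟨⟨hw1, hw2⟩, hne⟩)
      subst hwv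
      exact hno u hadj.symm hu
    · exact hwS (Or.inr ⟨⟨hw2, hw1⟩, u, hu, hadj⟩)

private lemma my_aux (h3 : KConnected 3 G) (h : MixedKSep G 3 X1 X2) {v : V}
    (hv : v ∈ X1 ∩ X2) (hle : (G.neighborSet v ∩ X1).ncard ≤ 1) :
    (G.neighborSet v ∩ X1).ncard = 1 ∧ G.neighborSet v ∩ X1 ⊆ X1 \ X2 ∧
      2 ≤ (G.neighborSet v ∩ (X2 \ X1)).ncard := by
  obtain ⟨u, huadj, huX⟩ := my_nbr h3 h hv
  have huN : u ∈ G.neighborSet v ∩ X1 := ⟨huadj, huX.1⟩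
  have hge : 1 ≤ (G.neighborSet v ∩ X1).ncard :=
    (Set.ncard_pos (Set.toFinite _)).2 ⟨u, huN⟩
  have h1 : (G.neighborSet v ∩ X1).ncard = 1 := le_antisymm hle hge
  obtain ⟨a, ha⟩ := Set.ncard_eq_one.mp h1
  have hau : a = u := by
    rw [ha] at huN
    exact huN.symm
  have hset : G.neighborSet v ∩ X1 = {u} := by rw [ha, hau]
  refine ⟨h1, by rw [hset]; exact Set.singleton_subset_iff.2 huX, ?_⟩
  have hsub : G.neighborSet v ⊆ (G.neighborSet v ∩ (X2 \ X1)) ∪ {u} := by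
    intro w hw
    by_cases hw1 : w ∈ X1
    · right
      have : w ∈ G.neighborSet v ∩ X1 := ⟨hw, hw1⟩
      rw [hset] at this
      exact this
    · left
      have hw2 : w ∈ X1 ∪ X2 := h.1.1 ▸ Set.mem_univ w
      rcases hw2 with h' | h'
      · exact absurd h' hw1
      · exact ⟨hw, h', hw1⟩
  have hdeg := my_deg h3 v
  have hle2 := Set.ncard_le_ncard hsub (Set.toFinite _)
  have hle3 := Set.ncard_union_le (G.neighborSet v ∩ (X2 \ X1)) ({u} : Set V)
  rw [Set.ncard_singleton] at hle3
  omega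

end StmtThreeAux

/-- For a vertex `v` in the separator of a mixed 3-separation
`(X1,X2)` of a 3-connected graph, exactly one of the two alternatives holds. -/
theorem stmt3 (G : SimpleGraph V) (h3 : KConnected 3 G) (X1 X2 : Set V)
    (h : MixedKSep G 3 X1 X2) (v : V) (hv : v ∈ X1 ∩ X2) :
    Xor'
      (2 ≤ (G.neighborSet v ∩ X1).ncard ∧ 2 ≤ (G.neighborSet v ∩ X2).ncard)
      (((G.neighborSet v ∩ X1).ncard = 1 ∧ G.neighborSet v ∩ X1 ⊆ X1 \ X2 ∧
          2 ≤ (G.neighborSet v ∩ (X2 \ X1)).ncard) ∨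
        ((G.neighborSet v ∩ X2).ncard = 1 ∧ G.neighborSet v ∩ X2 ⊆ X2 \ X1 ∧
          2 ≤ (G.neighborSet v ∩ (X1 \ X2)).ncard)) := by
  have hdeg := my_deg h3 v
  unfold Xor'
  by_cases h1 : (G.neighborSet v ∩ X1).ncard ≤ 1
  · obtain ⟨ha, hb, hc⟩ := my_aux h3 h hv h1
    exact Or.inr ⟨Or.inl ⟨ha, hb, hc⟩, fun hl => by omega⟩
  · by_cases h2 : (G.neighborSet v ∩ X2).ncard ≤ 1
    · obtain ⟨ha, hb, hc⟩ := my_aux h3 (my_symm h) ⟨hv.2, hv.1⟩ h2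
      exact Or.inr ⟨Or.inr ⟨ha, hb, hc⟩, fun hl => by omega⟩
    · push_neg at h1 h2
      refine Or.inl ⟨⟨h1, h2⟩, ?_⟩
      rintro (⟨ha, -, -⟩ | ⟨ha, -, -⟩) <;> omega


end Paper
end
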